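/- Let Ω ⊆ ℝ⁶ be open with coordinates (r,s,t,x,y,z), let u : Ω → ℝ be smooth with u_s ≠ 0 on Ω and F[u] = 0 on Ω, and let U : Ω → ℝ be smooth with ℓ_F(U) = 0 on Ω. Define R₁ := −(u_y/u_s) U_r + U_t − ((u_{st} − u_{ry})/u_s) U and R₂ := −(u_z/u_s) U_r + U_x + ((u_{rz} − u_{sx})/u_s) U, and the vector fields V₁ := ∂_y − (u_y/u_s) ∂_s, V₂ := ∂_z − (u_z/u_s) ∂_s. Then V₂(R₁) = V₁(R₂) holds identically on Ω; that is, the overdetermined system V₁(Ũ) = R₁, V₂(Ũ) = R₂ defining the recursion operator is compatible whenever U is a symmetry. -/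

import Mathlib

set_option maxHeartbeats 1000000


/- Coordinates on ℝ⁶: r = 0, s = 1, t = 2, x = 3, y = 4, z = 5. -/

/-- Partial derivative of `f` in the `i`-th coordinate direction. -/
noncomputable def pd (i : Fin 6) (f : (Fin 6 → ℝ) → ℝ) (p : Fin 6 → ℝ) : ℝ :=
  fderiv ℝ f p (Pi.single i 1)

/-- The six-dimensional equation
`F[u] = u_s u_{zt} − u_z u_{st} − u_s u_{xy} + u_y u_{sx} − u_y u_{rz} + u_z u_{ry}`. -/
noncomputable def Fop (u : (Fin 6 → ℝ) → ℝ) (p : Fin 6 → ℝ) : ℝ :=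
  pd 1 u p * pd 5 (pd 2 u) p - pd 5 u p * pd 1 (pd 2 u) p
    - pd 1 u p * pd 3 (pd 4 u) p + pd 4 u p * pd 1 (pd 3 u) p
    - pd 4 u p * pd 0 (pd 5 u) p + pd 5 u p * pd 0 (pd 4 u) p

/-- The linearization `ℓ_F(W)` of `F` at `u`, applied to `W`. -/
noncomputable def ellF (u W : (Fin 6 → ℝ) → ℝ) (p : Fin 6 → ℝ) : ℝ :=
  pd 1 W p * pd 5 (pd 2 u) p + pd 1 u p * pd 5 (pd 2 W) p
    - pd 5 W p * pd 1 (pd 2 u) p - pd 5 u p * pd 1 (pd 2 W) p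
    - pd 1 W p * pd 3 (pd 4 u) p - pd 1 u p * pd 3 (pd 4 W) p
    + pd 4 W p * pd 1 (pd 3 u) p + pd 4 u p * pd 1 (pd 3 W) p
    - pd 4 W p * pd 0 (pd 5 u) p - pd 4 u p * pd 0 (pd 5 W) p
    + pd 5 W p * pd 0 (pd 4 u) p + pd 5 u p * pd 0 (pd 4 W) p

/-- `R₁ = −(u_y/u_s) U_r + U_t − ((u_{st} − u_{ry})/u_s) U`. -/
noncomputable def R₁ (u U : (Fin 6 → ℝ) → ℝ) (p : Fin 6 → ℝ) : ℝ :=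
  -(pd 4 u p / pd 1 u p) * pd 0 U p + pd 2 U p
    - ((pd 1 (pd 2 u) p - pd 0 (pd 4 u) p) / pd 1 u p) * U p

/-- `R₂ = −(u_z/u_s) U_r + U_x + ((u_{rz} − u_{sx})/u_s) U`. -/
noncomputable def R₂ (u U : (Fin 6 → ℝ) → ℝ) (p : Fin 6 → ℝ) : ℝ :=
  -(pd 5 u p / pd 1 u p) * pd 0 U p + pd 3 U p
    + ((pd 0 (pd 5 u) p - pd 1 (pd 3 u) p) / pd 1 u p) * U p

section AuxLemmas

variable {f g : (Fin 6 → ℝ) → ℝ} {p : Fin 6 → ℝ} {Ω : Set (Fin 6 → ℝ)} {i j : Fin 6}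

lemma pd_congr (h : f =ᶠ[nhds p] g) (i : Fin 6) : pd i f p = pd i g p := by
  unfold pd; rw [h.fderiv_eq]

lemma pd_add (hf : DifferentiableAt ℝ f p) (hg : DifferentiableAt ℝ g p) :
    pd i (fun q => f q + g q) p = pd i f p + pd i g p := by
  unfold pd; rw [fderiv_fun_add hf hg]; simp

lemma pd_sub (hf : DifferentiableAt ℝ f p) (hg : DifferentiableAt ℝ g p) :
    pd i (fun q => f q - g q) p = pd i f p - pd i g p := by
  unfold pd; rw [fderiv_fun_sub hf hg]; simp

lemma pd_neg : pd i (fun q => -f q) p = -pd i f p := by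
  unfold pd; rw [fderiv_fun_neg]; simp

lemma pd_mul (hf : DifferentiableAt ℝ f p) (hg : DifferentiableAt ℝ g p) :
    pd i (fun q => f q * g q) p = pd i f p * g p + f p * pd i g p := by
  unfold pd; rw [fderiv_fun_mul hf hg]; simp; ring

lemma pd_inv (hg : DifferentiableAt ℝ g p) (h0 : g p ≠ 0) :
    pd i (fun q => (g q)⁻¹) p = -pd i g p / (g p) ^ 2 := by
  unfold pd
  rw [show (fun q => (g q)⁻¹) = (fun x : ℝ => x⁻¹) ∘ g from rfl,
    fderiv_comp p (differentiableAt_inv h0) hg]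
  simp [fderiv_inv]
  field_simp

lemma pd_div (hf : DifferentiableAt ℝ f p) (hg : DifferentiableAt ℝ g p) (h0 : g p ≠ 0) :
    pd i (fun q => f q / g q) p = (pd i f p * g p - f p * pd i g p) / (g p) ^ 2 := by
  have h : (fun q => f q / g q) = fun q => f q * (g q)⁻¹ := by
    funext q; rw [div_eq_mul_inv]
  rw [h, pd_mul hf (hg.fun_inv h0), pd_inv hg h0]
  field_simp; ring

lemma diffAt (hΩ : IsOpen Ω) (hf : ContDiffOn ℝ (⊤ : ℕ∞) f Ω) (hp : p ∈ Ω) :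
    DifferentiableAt ℝ f p :=
  (hf.contDiffAt (hΩ.mem_nhds hp)).differentiableAt
    (by simp)

lemma pd_smooth (hΩ : IsOpen Ω) (hf : ContDiffOn ℝ (⊤ : ℕ∞) f Ω) (i : Fin 6) :
    ContDiffOn ℝ (⊤ : ℕ∞) (pd i f) Ω := by
  have h1 : ContDiffOn ℝ (⊤ : ℕ∞) (fderiv ℝ f) Ω := hf.fderiv_of_isOpen hΩ (le_refl _)
  exact h1.clm_apply contDiffOn_const

lemma pd_comm (hΩ : IsOpen Ω) (hf : ContDiffOn ℝ (⊤ : ℕ∞) f Ω) (hp : p ∈ Ω) (i j : Fin 6) :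
    pd i (pd j f) p = pd j (pd i f) p := by
  have hd : DifferentiableAt ℝ (fderiv ℝ f) p :=
    ((hf.contDiffAt (hΩ.mem_nhds hp)).fderiv_right (m := (⊤ : ℕ∞)) (le_refl _)
      ).differentiableAt
      (by simp)
  have key : ∀ k l : Fin 6, pd k (pd l f) p
      = fderiv ℝ (fderiv ℝ f) p (Pi.single k 1) (Pi.single l 1) := by
    intro k l
    unfold pd
    rw [fderiv_clm_apply (u := fun _ => (Pi.single l 1 : Fin 6 → ℝ)) hd
      (differentiableAt_const _)]
    simp
  rw [key i j, key j i]
  exact ((hf.contDiffAt (hΩ.mem_nhds hp)).isSymmSndFDerivAt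
    (by refine le_trans ?_ (WithTop.coe_le_coe.mpr (le_top : (2:ℕ∞) ≤ ⊤)); norm_cast; simp)).eq _ _

lemma pd_eq_on (hΩ : IsOpen Ω) (hp : p ∈ Ω) (h : ∀ q ∈ Ω, f q = g q) (i : Fin 6) :
    pd i f p = pd i g p :=
  pd_congr (by filter_upwards [hΩ.mem_nhds hp] with q hq using h q hq) i

lemma pd_Rform (i : Fin 6) (A S B C E W : (Fin 6 → ℝ) → ℝ) (p : Fin 6 → ℝ)
    (hA : DifferentiableAt ℝ A p) (hS : DifferentiableAt ℝ S p)
    (hB : DifferentiableAt ℝ B p) (hC : DifferentiableAt ℝ C p)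
    (hE : DifferentiableAt ℝ E p) (hW : DifferentiableAt ℝ W p)
    (hS0 : S p ≠ 0) :
    pd i (fun q => -(A q / S q) * B q + C q + E q / S q * W q) p
      = -((pd i A p * S p - A p * pd i S p) / S p ^ 2) * B p - A p / S p * pd i B p
        + pd i C p
        + ((pd i E p * S p - E p * pd i S p) / S p ^ 2) * W p + E p / S p * pd i W p := by
  have hdivA : DifferentiableAt ℝ (fun q => A q / S q) p := by
    simp only [div_eq_mul_inv]; exact hA.mul (hS.inv hS0)
  have hdivE : DifferentiableAt ℝ (fun q => E q / S q) p := by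
    simp only [div_eq_mul_inv]; exact hE.mul (hS.inv hS0)
  rw [pd_add ((hdivA.fun_neg.fun_mul hB).fun_add hC) (hdivE.fun_mul hW),
      pd_add (hdivA.fun_neg.fun_mul hB) hC,
      pd_mul hdivA.fun_neg hB, pd_mul hdivE hW,
      pd_neg, pd_div hA hS hS0, pd_div hE hS hS0]
  ring

lemma pd_Fform (i : Fin 6) (f₁ g₁ f₂ g₂ f₃ g₃ f₄ g₄ f₅ g₅ f₆ g₆ : (Fin 6 → ℝ) → ℝ)
    (p : Fin 6 → ℝ)
    (h₁ : DifferentiableAt ℝ f₁ p) (k₁ : DifferentiableAt ℝ g₁ p)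
    (h₂ : DifferentiableAt ℝ f₂ p) (k₂ : DifferentiableAt ℝ g₂ p)
    (h₃ : DifferentiableAt ℝ f₃ p) (k₃ : DifferentiableAt ℝ g₃ p)
    (h₄ : DifferentiableAt ℝ f₄ p) (k₄ : DifferentiableAt ℝ g₄ p)
    (h₅ : DifferentiableAt ℝ f₅ p) (k₅ : DifferentiableAt ℝ g₅ p)
    (h₆ : DifferentiableAt ℝ f₆ p) (k₆ : DifferentiableAt ℝ g₆ p) :
    pd i (fun q => f₁ q * g₁ q - f₂ q * g₂ q - f₃ q * g₃ q + f₄ q * g₄ q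
        - f₅ q * g₅ q + f₆ q * g₆ q) p
      = (pd i f₁ p * g₁ p + f₁ p * pd i g₁ p) - (pd i f₂ p * g₂ p + f₂ p * pd i g₂ p)
        - (pd i f₃ p * g₃ p + f₃ p * pd i g₃ p) + (pd i f₄ p * g₄ p + f₄ p * pd i g₄ p)
        - (pd i f₅ p * g₅ p + f₅ p * pd i g₅ p) + (pd i f₆ p * g₆ p + f₆ p * pd i g₆ p) := by
  rw [pd_add (((((h₁.fun_mul k₁).fun_sub (h₂.fun_mul k₂)).fun_sub (h₃.fun_mul k₃)).fun_add (h₄.fun_mul k₄)).fun_sub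
        (h₅.fun_mul k₅)) (h₆.fun_mul k₆),
      pd_sub ((((h₁.fun_mul k₁).fun_sub (h₂.fun_mul k₂)).fun_sub (h₃.fun_mul k₃)).fun_add (h₄.fun_mul k₄)) (h₅.fun_mul k₅),
      pd_add (((h₁.fun_mul k₁).fun_sub (h₂.fun_mul k₂)).fun_sub (h₃.fun_mul k₃)) (h₄.fun_mul k₄),
      pd_sub ((h₁.fun_mul k₁).fun_sub (h₂.fun_mul k₂)) (h₃.fun_mul k₃),
      pd_sub (h₁.fun_mul k₁) (h₂.fun_mul k₂),
      pd_mul h₁ k₁, pd_mul h₂ k₂, pd_mul h₃ k₃, pd_mul h₄ k₄, pd_mul h₅ k₅, pd_mul h₆ k₆]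

end AuxLemmas

/-- Compatibility of the recursion system: `V₂(R₁) = V₁(R₂)`, where
`V₁ = ∂_y − (u_y/u_s) ∂_s` and `V₂ = ∂_z − (u_z/u_s) ∂_s`. -/
theorem recursion_system_compatible_six_dim
    (Ω : Set (Fin 6 → ℝ)) (hΩ : IsOpen Ω)
    (u U : (Fin 6 → ℝ) → ℝ)
    (hu : ContDiffOn ℝ (⊤ : ℕ∞) u Ω)
    (hU : ContDiffOn ℝ (⊤ : ℕ∞) U Ω)
    (hus : ∀ p ∈ Ω, pd 1 u p ≠ 0)
    (hF : ∀ p ∈ Ω, Fop u p = 0)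
    (hsym : ∀ p ∈ Ω, ellF u U p = 0) :
    ∀ p ∈ Ω,
      pd 5 (R₁ u U) p - (pd 5 u p / pd 1 u p) * pd 1 (R₁ u U) p =
        pd 4 (R₂ u U) p - (pd 4 u p / pd 1 u p) * pd 1 (R₂ u U) p := by
  intro p hp
  have hpn := hΩ.mem_nhds hp
  have su : ∀ k : Fin 6, ContDiffOn ℝ (⊤:ℕ∞) (pd k u) Ω := fun k => pd_smooth hΩ hu k
  have sU : ∀ k : Fin 6, ContDiffOn ℝ (⊤:ℕ∞) (pd k U) Ω := fun k => pd_smooth hΩ hU k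
  have du : ∀ k : Fin 6, DifferentiableAt ℝ (pd k u) p := fun k => diffAt hΩ (su k) hp
  have duu : ∀ k l : Fin 6, DifferentiableAt ℝ (pd k (pd l u)) p :=
    fun k l => diffAt hΩ (pd_smooth hΩ (su l) k) hp
  have dU : ∀ k : Fin 6, DifferentiableAt ℝ (pd k U) p := fun k => diffAt hΩ (sU k) hp
  have dUp : DifferentiableAt ℝ U p := diffAt hΩ hU hp
  have hS0 : pd 1 u p ≠ 0 := hus p hp
  have swapIn : ∀ k l : Fin 6, ∀ q ∈ Ω, pd k (pd l u) q = pd l (pd k u) q :=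
    fun k l q hq => pd_comm hΩ hu hq k l
  -- normalizations
  have m1 : pd 5 (pd 4 u) p = pd 4 (pd 5 u) p := pd_comm hΩ hu hp 5 4
  have m2 : pd 5 (pd 1 u) p = pd 1 (pd 5 u) p := pd_comm hΩ hu hp 5 1
  have m3 : pd 4 (pd 1 u) p = pd 1 (pd 4 u) p := pd_comm hΩ hu hp 4 1
  have k1 : pd 5 (pd 0 U) p = pd 0 (pd 5 U) p := pd_comm hΩ hU hp 5 0
  have k2 : pd 4 (pd 0 U) p = pd 0 (pd 4 U) p := pd_comm hΩ hU hp 4 0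
  have k3 : pd 4 (pd 3 U) p = pd 3 (pd 4 U) p := pd_comm hΩ hU hp 4 3
  have n1 : pd 5 (pd 0 (pd 4 u)) p = pd 0 (pd 4 (pd 5 u)) p := by
    rw [pd_comm hΩ (su 4) hp 5 0]
    exact pd_eq_on hΩ hp (fun q hq => swapIn 5 4 q hq) 0
  have n2 : pd 5 (pd 1 (pd 2 u)) p = pd 1 (pd 2 (pd 5 u)) p := by
    rw [pd_comm hΩ (su 2) hp 5 1]
    exact pd_eq_on hΩ hp (fun q hq => swapIn 5 2 q hq) 1
  have n3 : pd 1 (pd 0 (pd 4 u)) p = pd 0 (pd 1 (pd 4 u)) p := pd_comm hΩ (su 4) hp 1 0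
  have n4 : pd 4 (pd 0 (pd 5 u)) p = pd 0 (pd 4 (pd 5 u)) p := pd_comm hΩ (su 5) hp 4 0
  have n5 : pd 4 (pd 1 (pd 3 u)) p = pd 1 (pd 3 (pd 4 u)) p := by
    rw [pd_comm hΩ (su 3) hp 4 1]
    exact pd_eq_on hΩ hp (fun q hq => swapIn 4 3 q hq) 1
  have n6 : pd 1 (pd 0 (pd 5 u)) p = pd 0 (pd 1 (pd 5 u)) p := pd_comm hΩ (su 5) hp 1 0
  have n7 : pd 1 (pd 5 (pd 2 u)) p = pd 1 (pd 2 (pd 5 u)) p :=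
    pd_eq_on hΩ hp (fun q hq => swapIn 5 2 q hq) 1
  -- rewrite R₁, R₂ in a convenient form
  have hR1f : R₁ u U = (fun q => -(pd 4 u q / pd 1 u q) * pd 0 U q + pd 2 U q
      + (pd 0 (pd 4 u) q - pd 1 (pd 2 u) q) / pd 1 u q * U q) := by
    funext q; simp only [R₁]; ring
  have hR2f : R₂ u U = (fun q => -(pd 5 u q / pd 1 u q) * pd 0 U q + pd 3 U q
      + (pd 0 (pd 5 u) q - pd 1 (pd 3 u) q) / pd 1 u q * U q) := by
    funext q; simp only [R₂]
  rw [hR1f, hR2f,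
    pd_Rform 5 (pd 4 u) (pd 1 u) (pd 0 U) (pd 2 U)
      (fun q => pd 0 (pd 4 u) q - pd 1 (pd 2 u) q) U p
      (du 4) (du 1) (dU 0) (dU 2) ((duu 0 4).sub (duu 1 2)) dUp hS0,
    pd_Rform 1 (pd 4 u) (pd 1 u) (pd 0 U) (pd 2 U)
      (fun q => pd 0 (pd 4 u) q - pd 1 (pd 2 u) q) U p
      (du 4) (du 1) (dU 0) (dU 2) ((duu 0 4).sub (duu 1 2)) dUp hS0,
    pd_Rform 4 (pd 5 u) (pd 1 u) (pd 0 U) (pd 3 U)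
      (fun q => pd 0 (pd 5 u) q - pd 1 (pd 3 u) q) U p
      (du 5) (du 1) (dU 0) (dU 3) ((duu 0 5).sub (duu 1 3)) dUp hS0,
    pd_Rform 1 (pd 5 u) (pd 1 u) (pd 0 U) (pd 3 U)
      (fun q => pd 0 (pd 5 u) q - pd 1 (pd 3 u) q) U p
      (du 5) (du 1) (dU 0) (dU 3) ((duu 0 5).sub (duu 1 3)) dUp hS0,
    pd_sub (duu 0 4) (duu 1 2), pd_sub (duu 0 4) (duu 1 2),
    pd_sub (duu 0 5) (duu 1 3), pd_sub (duu 0 5) (duu 1 3),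
    m1, m2, m3, k1, k2, k3, n1, n2, n3, n4, n5, n6]
  -- the equation and its s-derivative, and the symmetry equation, at p
  have hF0 := hF p hp
  have hL0 := hsym p hp
  unfold Fop at hF0
  unfold ellF at hL0
  have hFs0 : pd 1 (Fop u) p = 0 := by
    have h0 : Fop u =ᶠ[nhds p] (fun _ => (0:ℝ)) := by
      filter_upwards [hpn] with q hq using hF q hq
    rw [pd_congr h0 1]
    simp [pd]
  have hFopf : Fop u = (fun q => pd 1 u q * pd 5 (pd 2 u) q - pd 5 u q * pd 1 (pd 2 u) q
      - pd 1 u q * pd 3 (pd 4 u) q + pd 4 u q * pd 1 (pd 3 u) q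
      - pd 4 u q * pd 0 (pd 5 u) q + pd 5 u q * pd 0 (pd 4 u) q) := rfl
  rw [hFopf,
    pd_Fform 1 (pd 1 u) (pd 5 (pd 2 u)) (pd 5 u) (pd 1 (pd 2 u)) (pd 1 u) (pd 3 (pd 4 u))
      (pd 4 u) (pd 1 (pd 3 u)) (pd 4 u) (pd 0 (pd 5 u)) (pd 5 u) (pd 0 (pd 4 u)) p
      (du 1) (duu 5 2) (du 5) (duu 1 2) (du 1) (duu 3 4)
      (du 4) (duu 1 3) (du 4) (duu 0 5) (du 5) (duu 0 4),
    n7, n6, n3] at hFs0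
  -- introduce names for all the derivative values at p
  set us := pd 1 u p with hus_def
  set uy := pd 4 u p with huy_def
  set uz := pd 5 u p with huz_def
  set uzt := pd 5 (pd 2 u) p with e1_def
  set ust := pd 1 (pd 2 u) p with e2_def
  set uxy := pd 3 (pd 4 u) p with e3_def
  set usx := pd 1 (pd 3 u) p with e4_def
  set urz := pd 0 (pd 5 u) p with e5_def
  set ury := pd 0 (pd 4 u) p with e6_def
  set usz := pd 1 (pd 5 u) p with e7_def
  set usy := pd 1 (pd 4 u) p with e8_def
  set uss := pd 1 (pd 1 u) p with e9_def
  set uyz := pd 4 (pd 5 u) p with e10_def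
  set c045 := pd 0 (pd 4 (pd 5 u)) p with c1_def
  set c125 := pd 1 (pd 2 (pd 5 u)) p with c2_def
  set c014 := pd 0 (pd 1 (pd 4 u)) p with c3_def
  set c112 := pd 1 (pd 1 (pd 2 u)) p with c4_def
  set c134 := pd 1 (pd 3 (pd 4 u)) p with c5_def
  set c015 := pd 0 (pd 1 (pd 5 u)) p with c6_def
  set c113 := pd 1 (pd 1 (pd 3 u)) p with c7_def
  set Up := U p with U0_def
  set Ur := pd 0 U p with U1_def
  set Us := pd 1 U p with U2_def
  set Uy := pd 4 U p with U3_def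
  set Uz := pd 5 U p with U4_def
  set Urs := pd 1 (pd 0 U) p with V1_def
  set Urz := pd 0 (pd 5 U) p with V2_def
  set Ury := pd 0 (pd 4 U) p with V3_def
  set Ust := pd 1 (pd 2 U) p with V4_def
  set Usx := pd 1 (pd 3 U) p with V5_def
  set Uzt := pd 5 (pd 2 U) p with V6_def
  set Uxy := pd 3 (pd 4 U) p with V7_def
  have key :
      ((-((uyz*us - uy*usz)/us^2)*Ur - uy/us*Urz + Uzt
          + ((c045 - c125)*us - (ury - ust)*usz)/us^2*Up + (ury - ust)/us*Uz)
        - uz/us*(-((usy*us - uy*uss)/us^2)*Ur - uy/us*Urs + Ust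
          + ((c014 - c112)*us - (ury - ust)*uss)/us^2*Up + (ury - ust)/us*Us))
      - ((-((uyz*us - uz*usy)/us^2)*Ur - uz/us*Ury + Uxy
          + ((c045 - c134)*us - (urz - usx)*usy)/us^2*Up + (urz - usx)/us*Uy)
        - uy/us*(-((usz*us - uz*uss)/us^2)*Ur - uz/us*Urs + Usx
          + ((c015 - c113)*us - (urz - usx)*uss)/us^2*Up + (urz - usx)/us*Us))
      = (us^2*(Us * uzt + us * Uzt - Uz * ust - uz * Ust - Us * uxy - us * Uxy
            + Uy * usx + uy * Usx - Uy * urz - uy * Urz + Uz * ury + uz * Ury)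
        - us*Us*(us * uzt - uz * ust - us * uxy + uy * usx - uy * urz + uz * ury)
        - us*Up*((uss * uzt + us * c125) - (usz * ust + uz * c112)
            - (uss * uxy + us * c134) + (usy * usx + uy * c113)
            - (usy * urz + uy * c015) + (usz * ury + uz * c014))
        + Up*uss*(us * uzt - uz * ust - us * uxy + uy * usx - uy * urz + uz * ury))/us^3 := by
    field_simp
    ring
  rw [hF0, hL0, hFs0] at key
  simp at key
  linarith
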